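/- For every function f : ℝ → ℝ there exists a function y : ℝ → ℝ such that |y(t)| ≤ |f(t)| for all t ∈ ℝ and, for every t in the domain of tan (i.e., t ≠ kπ + π/2), one has f(t) + tan t = tan(t + y(t)) with t + y(t) in the domain of tan. -/
import Mathlib

open Real

lemma arctan_lipschitz : LipschitzWith 1 Real.arctan := by
  apply lipschitzWith_of_nnnorm_deriv_le (fun x => Real.differentiableAt_arctan x)
  intro x
  rw [(Real.hasDerivAt_arctan x).deriv]
  rw [← NNReal.coe_le_coe, coe_nnnorm, Real.norm_eq_abs, NNReal.coe_one]
  rw [abs_of_pos (by positivity)]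
  rw [div_le_one (by positivity)]
  nlinarith [sq_nonneg x]

lemma arctan_dist (a b : ℝ) : |Real.arctan a - Real.arctan b| ≤ |a - b| := by
  have := arctan_lipschitz.dist_le_mul a b
  simpa [Real.dist_eq] using this

theorem tan_additive_shift (f : ℝ → ℝ) :
    ∃ y : ℝ → ℝ, (∀ t, |y t| ≤ |f t|) ∧
      ∀ t, (∀ k : ℤ, t ≠ k * π + π / 2) →
        (∀ k : ℤ, t + y t ≠ k * π + π / 2) ∧
        f t + Real.tan t = Real.tan (t + y t) := by
  classical
  set K : ℝ → ℤ := fun t => ⌊t / π + 1 / 2⌋ with hK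
  refine ⟨fun t => if ∀ k : ℤ, t ≠ k * π + π / 2 then
      Real.arctan (f t + Real.tan t) + K t * π - t else 0, ?_, ?_⟩
  · intro t
    by_cases h : ∀ k : ℤ, t ≠ k * π + π / 2
    · simp only
      rw [if_pos h]
      have hpi := Real.pi_pos
      -- s := t - K t * π ∈ (-π/2, π/2)
      set s : ℝ := t - K t * π with hs
      have h1 : (K t : ℝ) ≤ t / π + 1 / 2 := Int.floor_le _
      have h2 : t / π + 1 / 2 < K t + 1 := Int.lt_floor_add_one _
      have hsl : -(π / 2) ≤ s := by
        have : (K t : ℝ) * π ≤ t + π / 2 := by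
          have := mul_le_mul_of_nonneg_right h1 hpi.le
          rw [add_mul, div_mul_cancel₀ _ hpi.ne'] at this
          linarith
        simp only [hs]; linarith
      have hsr : s < π / 2 := by
        have : t + π / 2 < (K t : ℝ) * π + π := by
          have := mul_lt_mul_of_pos_right h2 hpi
          rw [add_mul, add_mul, div_mul_cancel₀ _ hpi.ne', one_mul] at this
          linarith
        simp only [hs]; linarith
      have hsl' : -(π / 2) < s := by
        rcases lt_or_eq_of_le hsl with h' | h'
        · exact h'
        · exfalso
          apply h (K t - 1)
          push_cast
          simp only [hs] at h'
          linarith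
      have htan : Real.tan s = Real.tan t := by
        simpa [hs] using Real.tan_periodic.sub_int_mul_eq (f := Real.tan) (K t)
      have harc : Real.arctan (Real.tan s) = s := Real.arctan_tan hsl' hsr
      have : Real.arctan (f t + Real.tan t) + K t * π - t
          = Real.arctan (Real.tan s + f t) - Real.arctan (Real.tan s) := by
        rw [harc, htan, hs]; ring_nf
      rw [this]
      calc |Real.arctan (Real.tan s + f t) - Real.arctan (Real.tan s)|
          ≤ |Real.tan s + f t - Real.tan s| := arctan_dist _ _
        _ = |f t| := by ring_nf
    · simp only
      rw [if_neg h]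
      simp
  · intro t ht
    simp only
    rw [if_pos ht]
    have ha1 := Real.neg_pi_div_two_lt_arctan (f t + Real.tan t)
    have ha2 := Real.arctan_lt_pi_div_two (f t + Real.tan t)
    have hty : t + (Real.arctan (f t + Real.tan t) + K t * π - t)
        = Real.arctan (f t + Real.tan t) + K t * π := by ring
    constructor
    · intro m hm
      rw [hty] at hm
      have hpi := Real.pi_pos
      have : Real.arctan (f t + Real.tan t) - π / 2 = ((m - K t : ℤ) : ℝ) * π := by
        push_cast; linarith
      have h1 : ((m - K t : ℤ) : ℝ) * π < 0 := by rw [← this]; linarith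
      have h2 : -π < ((m - K t : ℤ) : ℝ) * π := by rw [← this]; linarith
      have hm1 : (m - K t : ℤ) < 0 := by
        by_contra hc
        push_neg at hc
        have : (0:ℝ) ≤ ((m - K t : ℤ) : ℝ) * π := by
          apply mul_nonneg _ hpi.le
          exact_mod_cast hc
        linarith
      have hm2 : (-1 : ℤ) < m - K t := by
        by_contra hc
        push_neg at hc
        have : ((m - K t : ℤ) : ℝ) * π ≤ -1 * π := by
          apply mul_le_mul_of_nonneg_right _ hpi.le
          exact_mod_cast hc
        linarith
      omega
    · rw [hty]
      rw [(Real.tan_periodic.int_mul (K t)) (Real.arctan (f t + Real.tan t)),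
        Real.tan_arctan]
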